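/- If p is a monic polynomial of degree d, T(z) = αz + β with α ≠ 0 is an affine transformation, and Tp is the monic polynomial whose roots are the T-images of the roots of p, then W_{Tp} = T ∘ W_p ∘ T⁻¹, where T acts on ℂ^d component-wise. That is, the Weierstrass dynamics for p and Tp are affinely conjugate. -/

import Mathlib

open Polynomial Finset

/-- The Weierstrass dynamics for `p` and `Tp` are affinely conjugate:
if `p` is monic with roots `α_j`, `T(z) = a z + b` with `a ≠ 0`, and `Tp` is the
monic polynomial with roots `T(α_j)`, then `W_{Tp}(T·z) = T·(W_p z)` for every
`z ∈ ℂ^d` with pairwise distinct entries, `T` acting component-wise. -/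
theorem weierstrass_affine_conjugation
    (d : ℕ) (α : Fin d → ℂ) (a b : ℂ) (ha : a ≠ 0)
    (p Tp : Polynomial ℂ)
    (hp : p = ∏ j : Fin d, (X - C (α j)))
    (hTp : Tp = ∏ j : Fin d, (X - C (a * α j + b)))
    (W WT : (Fin d → ℂ) → Fin d → ℂ)
    (hW : ∀ (z : Fin d → ℂ) (k : Fin d),
      W z k = z k - p.eval (z k) / ∏ j ∈ univ.erase k, (z k - z j))
    (hWT : ∀ (z : Fin d → ℂ) (k : Fin d),
      WT z k = z k - Tp.eval (z k) / ∏ j ∈ univ.erase k, (z k - z j))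
    (z : Fin d → ℂ) (hz : Function.Injective z) :
    ∀ k : Fin d, WT (fun i => a * z i + b) k = a * W z k + b := by
  intro k
  have hd : 0 < d := k.pos
  rw [hWT, hW, hTp, hp]
  simp only [eval_prod, eval_sub, eval_X, eval_C]
  have hnum : ∏ j : Fin d, (a * z k + b - (a * α j + b))
      = a ^ d * ∏ j : Fin d, (z k - α j) := by
    calc ∏ j : Fin d, (a * z k + b - (a * α j + b))
        = ∏ j : Fin d, a * (z k - α j) :=
          Finset.prod_congr rfl (fun j _ => by ring)
      _ = a ^ d * ∏ j : Fin d, (z k - α j) := by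
          rw [Finset.prod_mul_distrib, Finset.prod_const, card_univ, Fintype.card_fin]
  have hden : ∏ j ∈ univ.erase k, (a * z k + b - (a * z j + b))
      = a ^ (d - 1) * ∏ j ∈ univ.erase k, (z k - z j) := by
    calc ∏ j ∈ univ.erase k, (a * z k + b - (a * z j + b))
        = ∏ j ∈ univ.erase k, a * (z k - z j) :=
          Finset.prod_congr rfl (fun j _ => by ring)
      _ = a ^ (d - 1) * ∏ j ∈ univ.erase k, (z k - z j) := by
          rw [Finset.prod_mul_distrib, Finset.prod_const,
            Finset.card_erase_of_mem (mem_univ k), card_univ, Fintype.card_fin]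
  rw [hnum, hden]
  have hD : (∏ j ∈ univ.erase k, (z k - z j)) ≠ 0 := by
    apply Finset.prod_ne_zero_iff.mpr
    intro j hj
    have : j ≠ k := (Finset.mem_erase.mp hj).1
    exact sub_ne_zero.mpr fun h => this (hz h).symm
  have hpow : a ^ d = a * a ^ (d - 1) := by
    rw [← pow_succ']
    congr 1
    omega
  rw [hpow]
  field_simp
  ring
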